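/- The function g is strictly decreasing on the interval (0, 20/21). -/

import Mathlib

/-- The lower-bound function `g` of Theorem II.1 (base-2 logarithms; since
`Real.logb 2 0 = 0`, terms of the form `0 · log₂ 0` vanish as intended). -/
noncomputable def g (r : ℝ) : ℝ :=
  (1/64) * (2*(1-r) * Real.logb 2 (1280*(1-r)/(43*r+20))
    + (63*r/10) * Real.logb 2 (64*r/(43*r+20))
    + 18*(1-r) * Real.logb 2 (640*(1-r)/(11*r+20))
    + (279*r/10) * Real.logb 2 (32*r/(11*r+20))
    + 6*(1-r) * Real.logb 2 (1280*(1-r)/(r+60))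
    + (61*r/10) * Real.logb 2 (64*r/(r+60))
    + 20*(1-r) * Real.logb 2 (64*(1-r)/(4-r))
    + 15*r * Real.logb 2 (16*r/(5*(4-r)))
    + 18*(1-r) * Real.logb 2 (640*(1-r)/(60-31*r))
    + (87*r/10) * Real.logb 2 (32*r/(60-31*r)))

open Real Set

/-- affine derivative helpers -/
lemma hd_aff (a b r : ℝ) : HasDerivAt (fun x : ℝ => a*x+b) a r := by
  simpa using ((hasDerivAt_id r).const_mul a).add_const b

lemma hd_saff (a b r : ℝ) : HasDerivAt (fun x : ℝ => b - a*x) (-a) r := by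
  simpa using ((hasDerivAt_id r).const_mul a).const_sub b

lemma hd_aff_mul_log (a b r : ℝ) (h : 0 < a*r+b) :
    HasDerivAt (fun x : ℝ => (a*x+b)*Real.log (a*x+b)) (a*(Real.log (a*r+b)+1)) r := by
  have := (Real.hasDerivAt_mul_log h.ne').comp r (hd_aff a b r)
  refine this.congr_deriv (Eq.symm ?_)
  show a*(Real.log (a*r+b)+1) = (Real.log (a*r+b)+1)*a
  ring

lemma hd_saff_mul_log (a b r : ℝ) (h : 0 < b - a*r) :
    HasDerivAt (fun x : ℝ => (b - a*x)*Real.log (b - a*x)) (-(a*(Real.log (b - a*r)+1))) r := by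
  have := (Real.hasDerivAt_mul_log h.ne').comp r (hd_saff a b r)
  refine this.congr_deriv (Eq.symm ?_)
  show -(a*(Real.log (b-a*r)+1)) = (Real.log (b-a*r)+1)*(-a)
  ring

lemma hd_log_aff (a b r : ℝ) (h : 0 < a*r+b) :
    HasDerivAt (fun x : ℝ => Real.log (a*x+b)) (a/(a*r+b)) r := by
  simpa using (hd_aff a b r).log h.ne'

lemma hd_log_saff (a b r : ℝ) (h : 0 < b - a*r) :
    HasDerivAt (fun x : ℝ => Real.log (b - a*x)) (-a/(b - a*r)) r := by
  simpa using (hd_saff a b r).log h.ne'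

noncomputable def Faux (r : ℝ) : ℝ :=
  640*Real.log r - 640*Real.log (1-r) - 1186*Real.log 2 - 590*Real.log 5
  - 43*Real.log (43*r+20) - 99*Real.log (11*r+20) - Real.log (r+60)
  + 50*Real.log (4-r) + 93*Real.log (60-31*r)

lemma hd_Faux (r : ℝ) (h0 : 0 < r) (h1 : r < 1) :
    HasDerivAt Faux (640/r + 640/(1-r) - 1849/(43*r+20) - 1089/(11*r+20)
      - 1/(r+60) - 50/(4-r) - 2883/(60-31*r)) r := by
  have e1 : HasDerivAt (fun x : ℝ => Real.log x) (1/r) r := by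
    simpa using Real.hasDerivAt_log h0.ne'
  have e2 := hd_log_saff 1 1 r (by linarith)
  have e3 := hd_log_aff 43 20 r (by linarith)
  have e4 := hd_log_aff 11 20 r (by linarith)
  have e5 := hd_log_aff 1 60 r (by linarith)
  have e6 := hd_log_saff 1 4 r (by linarith)
  have e7 := hd_log_saff 31 60 r (by linarith)
  have H := (((((((e1.const_mul 640).sub (e2.const_mul 640)).sub_const
    (1186*Real.log 2)).sub_const (590*Real.log 5)).sub (e3.const_mul 43)).sub
    (e4.const_mul 99)).sub e5).add (e6.const_mul 50) |>.add (e7.const_mul 93)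
  have hfun : Faux = fun x : ℝ =>
      ((640*Real.log x - 640*Real.log (1-1*x) - 1186*Real.log 2 - 590*Real.log 5
      - 43*Real.log (43*x+20) - 99*Real.log (11*x+20) - Real.log (1*x+60))
      + 50*Real.log (4-1*x)) + 93*Real.log (60-31*x) := by
    funext x; simp only [Faux, one_mul]
  rw [hfun]
  refine H.congr_deriv ?_
  have d1 : (1:ℝ)*r+60 = r+60 := by ring
  have d2 : (1:ℝ) - 1*r = 1-r := by ring
  have d3 : (4:ℝ) - 1*r = 4-r := by ring
  rw [d1, d2, d3]
  field_simp
  ring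

lemma Faux_end : Faux (20/21) = 0 := by
  have l20 : Real.log 20 = 2*Real.log 2 + Real.log 5 := by
    rw [show (20:ℝ) = 2^2*5 by norm_num, Real.log_mul (by norm_num) (by norm_num),
      Real.log_pow]; push_cast; ring
  have l1280 : Real.log 1280 = 8*Real.log 2 + Real.log 5 := by
    rw [show (1280:ℝ) = 2^8*5 by norm_num, Real.log_mul (by norm_num) (by norm_num),
      Real.log_pow]; push_cast; ring
  have l640 : Real.log 640 = 7*Real.log 2 + Real.log 5 := by
    rw [show (640:ℝ) = 2^7*5 by norm_num, Real.log_mul (by norm_num) (by norm_num),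
      Real.log_pow]; push_cast; ring
  have l64 : Real.log 64 = 6*Real.log 2 := by
    rw [show (64:ℝ) = 2^6 by norm_num, Real.log_pow]; push_cast; ring
  have q : ∀ a : ℝ, 0 < a → Real.log (a/21) = Real.log a - Real.log 21 :=
    fun a ha => Real.log_div ha.ne' (by norm_num)
  have a1 : (1:ℝ) - 20/21 = 1/21 := by norm_num
  have a2 : (43:ℝ)*(20/21)+20 = 1280/21 := by norm_num
  have a3 : (11:ℝ)*(20/21)+20 = 640/21 := by norm_num
  have a4 : (20:ℝ)/21+60 = 1280/21 := by norm_num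
  have a5 : (4:ℝ) - 20/21 = 64/21 := by norm_num
  have a6 : (60:ℝ) - 31*(20/21) = 640/21 := by norm_num
  rw [Faux, a1, a2, a3, a4, a5, a6, q 20 (by norm_num), q 1 (by norm_num),
    q 1280 (by norm_num), q 640 (by norm_num), q 64 (by norm_num),
    l20, l1280, l640, l64, Real.log_one]
  ring

lemma Faux_neg {r : ℝ} (hr : r ∈ Ioo (0:ℝ) (20/21)) : Faux r < 0 := by
  obtain ⟨h0, h2⟩ := hr
  have hmono : StrictMonoOn Faux (Ioc (0:ℝ) (20/21)) := by
    apply strictMonoOn_of_deriv_pos (convex_Ioc _ _)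
    · intro x hx
      exact (hd_Faux x hx.1 (by nlinarith [hx.2])).differentiableAt.continuousAt.continuousWithinAt
    · intro x hx
      rw [interior_Ioc] at hx
      obtain ⟨hx0, hx2⟩ := hx
      have hx1 : x < 1 := by nlinarith
      rw [(hd_Faux x hx0 hx1).deriv]
      have b1 : 640 < 640/x := by rw [lt_div_iff₀ hx0]; nlinarith
      have b2 : (0:ℝ) < 640/(1-x) := div_pos (by norm_num) (by linarith)
      have b3 : 1849/(43*x+20) ≤ 93 := by rw [div_le_iff₀ (by linarith)]; nlinarith
      have b4 : 1089/(11*x+20) ≤ 55 := by rw [div_le_iff₀ (by linarith)]; nlinarith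
      have b5 : 1/(x+60) ≤ 1 := by rw [div_le_iff₀ (by linarith)]; nlinarith
      have b6 : 50/(4-x) ≤ 17 := by rw [div_le_iff₀ (by linarith)]; nlinarith
      have b7 : 2883/(60-31*x) ≤ 95 := by rw [div_le_iff₀ (by nlinarith)]; nlinarith
      linarith
  have := hmono (Set.mem_Ioc.mpr ⟨h0, h2.le⟩) (Set.mem_Ioc.mpr ⟨by norm_num, le_refl _⟩) h2
  rwa [Faux_end] at this

noncomputable def Gaux (r : ℝ) : ℝ :=
  (1/(64 * Real.log 2)) * (64*((1-r)*Real.log (1-r)) + 64*(r*Real.log r)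
    + (1-r)*(436*Real.log 2 + 44*Real.log 5) + r*((3174*Real.log 2 - 150*Real.log 5)/10)
    - (1/10)*((43*r+20)*Real.log (43*r+20) + 9*((11*r+20)*Real.log (11*r+20))
      + (r+60)*Real.log (r+60) + 50*((4-r)*Real.log (4-r))
      + 3*((60-31*r)*Real.log (60-31*r))))

lemma hd_Gaux (r : ℝ) (h0 : 0 < r) (h1 : r < 1) :
    HasDerivAt Gaux (Faux r / (640 * Real.log 2)) r := by
  have e1 : HasDerivAt (fun x : ℝ => x*Real.log x) (Real.log r + 1) r :=
    Real.hasDerivAt_mul_log h0.ne'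
  have e2 : HasDerivAt (fun x : ℝ => (1-x)*Real.log (1-x)) (-(Real.log (1-r)+1)) r := by
    have := hd_saff_mul_log 1 1 r (by linarith)
    simpa using this
  have e3 := hd_aff_mul_log 43 20 r (by linarith)
  have e4 := hd_aff_mul_log 11 20 r (by linarith)
  have e5 : HasDerivAt (fun x : ℝ => (x+60)*Real.log (x+60)) (Real.log (r+60)+1) r := by
    have := hd_aff_mul_log 1 60 r (by linarith)
    simpa using this
  have e6 : HasDerivAt (fun x : ℝ => (4-x)*Real.log (4-x)) (-(Real.log (4-r)+1)) r := by
    have := hd_saff_mul_log 1 4 r (by linarith)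
    simpa using this
  have e7 := hd_saff_mul_log 31 60 r (by linarith)
  have c1 : HasDerivAt (fun x : ℝ => (1-x)*(436*Real.log 2 + 44*Real.log 5))
      (-(436*Real.log 2 + 44*Real.log 5)) r := by
    have : HasDerivAt (fun x : ℝ => 1-x) (-1) r := by
      simpa using (hasDerivAt_id r).const_sub 1
    simpa using this.mul_const (436*Real.log 2 + 44*Real.log 5)
  have c2 : HasDerivAt (fun x : ℝ => x*((3174*Real.log 2 - 150*Real.log 5)/10))
      ((3174*Real.log 2 - 150*Real.log 5)/10) r := by
    simpa using (hasDerivAt_id r).mul_const ((3174*Real.log 2 - 150*Real.log 5)/10)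
  have Hb := (((((e3.add (e4.const_mul 9)).add e5).add (e6.const_mul 50)).add
    (e7.const_mul 3)).const_mul (1/10))
  have H := ((((((e2.const_mul 64).add (e1.const_mul 64)).add c1).add c2).sub
    Hb).const_mul (1/(64*Real.log 2)))
  have hlog2 : Real.log 2 ≠ 0 := ne_of_gt (Real.log_pos (by norm_num))
  refine H.congr_deriv ?_
  simp only [Faux]
  field_simp
  ring

set_option maxHeartbeats 1000000 in
lemma g_eq_Gaux {r : ℝ} (hr : r ∈ Set.Ioo (0:ℝ) (20/21)) : g r = Gaux r := by
  obtain ⟨h0, h2⟩ := hr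
  have hs : (0:ℝ) < 1 - r := by linarith
  have d1 : (0:ℝ) < 43*r+20 := by linarith
  have d2 : (0:ℝ) < 11*r+20 := by linarith
  have d3 : (0:ℝ) < r+60 := by linarith
  have d4 : (0:ℝ) < 4-r := by linarith
  have d5 : (0:ℝ) < 60-31*r := by linarith
  have l1280 : Real.log 1280 = 8*Real.log 2 + Real.log 5 := by
    rw [show (1280:ℝ) = 2^8*5 by norm_num, Real.log_mul (by norm_num) (by norm_num),
      Real.log_pow]; push_cast; ring
  have l640 : Real.log 640 = 7*Real.log 2 + Real.log 5 := by
    rw [show (640:ℝ) = 2^7*5 by norm_num, Real.log_mul (by norm_num) (by norm_num),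
      Real.log_pow]; push_cast; ring
  have l64 : Real.log 64 = 6*Real.log 2 := by
    rw [show (64:ℝ) = 2^6 by norm_num, Real.log_pow]; push_cast; ring
  have l32 : Real.log 32 = 5*Real.log 2 := by
    rw [show (32:ℝ) = 2^5 by norm_num, Real.log_pow]; push_cast; ring
  have l16 : Real.log 16 = 4*Real.log 2 := by
    rw [show (16:ℝ) = 2^4 by norm_num, Real.log_pow]; push_cast; ring
  have E1 : Real.log (1280*(1-r)/(43*r+20))
      = 8*Real.log 2 + Real.log 5 + Real.log (1-r) - Real.log (43*r+20) := by
    rw [Real.log_div (mul_pos (by norm_num) hs).ne' d1.ne', Real.log_mul (by norm_num) hs.ne', l1280]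
  have E2 : Real.log (64*r/(43*r+20))
      = 6*Real.log 2 + Real.log r - Real.log (43*r+20) := by
    rw [Real.log_div (mul_pos (by norm_num) h0).ne' d1.ne', Real.log_mul (by norm_num) h0.ne', l64]
  have E3 : Real.log (640*(1-r)/(11*r+20))
      = 7*Real.log 2 + Real.log 5 + Real.log (1-r) - Real.log (11*r+20) := by
    rw [Real.log_div (mul_pos (by norm_num) hs).ne' d2.ne', Real.log_mul (by norm_num) hs.ne', l640]
  have E4 : Real.log (32*r/(11*r+20))
      = 5*Real.log 2 + Real.log r - Real.log (11*r+20) := by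
    rw [Real.log_div (mul_pos (by norm_num) h0).ne' d2.ne', Real.log_mul (by norm_num) h0.ne', l32]
  have E5 : Real.log (1280*(1-r)/(r+60))
      = 8*Real.log 2 + Real.log 5 + Real.log (1-r) - Real.log (r+60) := by
    rw [Real.log_div (mul_pos (by norm_num) hs).ne' d3.ne', Real.log_mul (by norm_num) hs.ne', l1280]
  have E6 : Real.log (64*r/(r+60))
      = 6*Real.log 2 + Real.log r - Real.log (r+60) := by
    rw [Real.log_div (mul_pos (by norm_num) h0).ne' d3.ne', Real.log_mul (by norm_num) h0.ne', l64]
  have E7 : Real.log (64*(1-r)/(4-r))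
      = 6*Real.log 2 + Real.log (1-r) - Real.log (4-r) := by
    rw [Real.log_div (mul_pos (by norm_num) hs).ne' d4.ne', Real.log_mul (by norm_num) hs.ne', l64]
  have E8 : Real.log (16*r/(5*(4-r)))
      = 4*Real.log 2 + Real.log r - (Real.log 5 + Real.log (4-r)) := by
    rw [Real.log_div (mul_pos (by norm_num) h0).ne' (mul_pos (by norm_num) d4).ne',
      Real.log_mul (by norm_num) h0.ne', Real.log_mul (by norm_num) d4.ne', l16]
  have E9 : Real.log (640*(1-r)/(60-31*r))
      = 7*Real.log 2 + Real.log 5 + Real.log (1-r) - Real.log (60-31*r) := by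
    rw [Real.log_div (mul_pos (by norm_num) hs).ne' d5.ne', Real.log_mul (by norm_num) hs.ne', l640]
  have E10 : Real.log (32*r/(60-31*r))
      = 5*Real.log 2 + Real.log r - Real.log (60-31*r) := by
    rw [Real.log_div (mul_pos (by norm_num) h0).ne' d5.ne', Real.log_mul (by norm_num) h0.ne', l32]
  have hlog2 : Real.log 2 ≠ 0 := ne_of_gt (Real.log_pos (by norm_num))
  simp only [g, Gaux, Real.logb, E1, E2, E3, E4, E5, E6, E7, E8, E9, E10]
  field_simp
  ring

/-- `g` is strictly decreasing on `(0, 20/21)`. -/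
theorem g_strictAntiOn : StrictAntiOn g (Set.Ioo (0 : ℝ) (20 / 21)) := by
  have hlog2 : (0:ℝ) < 640 * Real.log 2 :=
    mul_pos (by norm_num) (Real.log_pos (by norm_num))
  have hG : StrictAntiOn Gaux (Set.Ioo (0:ℝ) (20/21)) := by
    apply strictAntiOn_of_deriv_neg (convex_Ioo _ _)
    · intro x hx
      exact (hd_Gaux x hx.1 (by linarith [hx.2])).differentiableAt.continuousAt.continuousWithinAt
    · intro x hx
      rw [interior_Ioo] at hx
      rw [(hd_Gaux x hx.1 (by linarith [hx.2])).deriv]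
      exact div_neg_of_neg_of_pos (Faux_neg hx) hlog2
  intro x hx y hy hxy
  rw [g_eq_Gaux hx, g_eq_Gaux hy]
  exact hG hx hy hxy
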